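/- Let P and Q be positive semidefinite matrices on a finite-dimensional space 𝒳, let 𝒵 = ℂ^r with r ≥ max{rank(P), rank(Q)}, and let |p⟩, |q⟩ ∈ 𝒵 ⊗ 𝒳 be purifications of P and Q respectively, i.e., Tr_𝒵[|p⟩⟨p|] = P and Tr_𝒵[|q⟩⟨q|] = Q. Then the squared Bures distance satisfies B(P,Q) = min over unitaries U on 𝒵 of ‖ |p⟩ − (U ⊗ I_𝒳)|q⟩ ‖₂², where ‖·‖₂ is the Euclidean norm. -/

import Mathlib

open Matrix Kronecker
open scoped ComplexOrder

noncomputable section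

open Classical in
/-- The positive semidefinite square root of a PSD matrix (junk value `0` otherwise). -/
noncomputable def msqrt {n : Type*} [Fintype n] [DecidableEq n] (A : Matrix n n ℂ) :
    Matrix n n ℂ :=
  if h : A.PosSemidef then (h.1.eigenvectorUnitary : Matrix n n ℂ) *
    diagonal ((↑) ∘ (√·) ∘ h.1.eigenvalues) * (star (h.1.eigenvectorUnitary : Matrix n n ℂ))
    else 0

/-- The (square-root) fidelity `F(P,Q) = Tr[√(√Q P √Q)]`. -/
noncomputable def fidelity {n : Type*} [Fintype n] [DecidableEq n]
    (P Q : Matrix n n ℂ) : ℝ :=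
  ((msqrt (msqrt Q * P * msqrt Q)).trace).re

/-- The matrix geometric mean `A # B = A^{1/2} √(A^{-1/2} B A^{-1/2}) A^{1/2}`. -/
noncomputable def geomMean {n : Type*} [Fintype n] [DecidableEq n]
    (A B : Matrix n n ℂ) : Matrix n n ℂ :=
  msqrt A * msqrt ((msqrt A)⁻¹ * B * (msqrt A)⁻¹) * msqrt A

/-- Partial trace over the purifying first factor `𝒵`. -/
noncomputable def ptraceZ {Z X : Type*} [Fintype Z]
    (M : Matrix (Z × X) (Z × X) ℂ) : Matrix X X ℂ :=
  Matrix.of fun x x' => ∑ z : Z, M (z, x) (z, x')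

/-- The squared Bures distance `B(P,Q) = Tr P + Tr Q − 2 F(P,Q)`. -/
noncomputable def buresSq {n : Type*} [Fintype n] [DecidableEq n]
    (P Q : Matrix n n ℂ) : ℝ :=
  P.trace.re + Q.trace.re - 2 * fidelity P Q

open scoped MatrixOrder in
lemma msqrt_eq_sqrt {n : Type*} [Fintype n] [DecidableEq n] {A : Matrix n n ℂ}
    (hA : A.PosSemidef) : msqrt A = CFC.sqrt A := by
  rw [CFC.sqrt_eq_real_sqrt A hA.nonneg, cfcₙ_eq_cfc (hf0 := by simp), hA.1.cfc_eq,
    Matrix.IsHermitian.cfc, Unitary.conjStarAlgAut_apply, msqrt, dif_pos hA]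
  rfl

open scoped MatrixOrder in
lemma msqrt_psd {n : Type*} [Fintype n] [DecidableEq n] {A : Matrix n n ℂ}
    (hA : A.PosSemidef) : (msqrt A).PosSemidef := by
  rw [msqrt_eq_sqrt hA]; exact (CFC.sqrt_nonneg A).posSemidef

open scoped MatrixOrder in
lemma msqrt_mul_self {n : Type*} [Fintype n] [DecidableEq n] {A : Matrix n n ℂ}
    (hA : A.PosSemidef) : msqrt A * msqrt A = A := by
  rw [msqrt_eq_sqrt hA]; exact CFC.sqrt_mul_sqrt_self A hA.nonneg

open scoped MatrixOrder in
lemma eq_msqrt_of_sq_eq {n : Type*} [Fintype n] [DecidableEq n] {A B : Matrix n n ℂ}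
    (hB : B.PosSemidef) (hA : A.PosSemidef) (h : B ^ 2 = A) : B = msqrt A := by
  rw [msqrt_eq_sqrt hA]
  exact (CFC.sqrt_unique (by rw [← h, pow_two]) hB.nonneg).symm

lemma diag_cmul {m n : Type*} [Fintype m] (K : Matrix m n ℂ) (j : n) :
    (Kᴴ * K) j j = ((∑ i, Complex.normSq (K i j) : ℝ) : ℂ) := by
  push_cast
  simp [Matrix.mul_apply, Matrix.conjTranspose_apply, Complex.normSq_eq_conj_mul_self]

lemma col_normSq {m n : Type*} [Fintype m] [Fintype n] [DecidableEq n]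
    (K : Matrix m n ℂ) (d : n → ℝ) (h : Kᴴ * K = Matrix.diagonal (fun i => (d i : ℂ)))
    (j : n) : ∑ i, Complex.normSq (K i j) = d j := by
  have h1 : ((∑ i, Complex.normSq (K i j) : ℝ) : ℂ) = (d j : ℂ) := by
    rw [← diag_cmul, h]; simp
  exact_mod_cast h1

lemma col_eq_zero {m n : Type*} [Fintype m] [Fintype n] [DecidableEq n]
    (K : Matrix m n ℂ) (d : n → ℝ) (h : Kᴴ * K = Matrix.diagonal (fun i => (d i : ℂ)))
    {j : n} (hj : d j = 0) (i : m) : K i j = 0 := by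
  have h2 : ∑ i, Complex.normSq (K i j) = 0 := by rw [col_normSq K d h j, hj]
  have := (Finset.sum_eq_zero_iff_of_nonneg
    (fun i _ => Complex.normSq_nonneg (K i j))).mp h2 i (Finset.mem_univ i)
  exact Complex.normSq_eq_zero.mp this

lemma cs_abs {n : Type*} [Fintype n] (g k : n → ℂ) :
    ‖∑ i, (starRingEnd ℂ) (g i) * k i‖ ≤
      Real.sqrt (∑ i, Complex.normSq (g i)) * Real.sqrt (∑ i, Complex.normSq (k i)) := by
  have h := norm_inner_le_norm (𝕜 := ℂ)
    ((WithLp.equiv 2 (n → ℂ)).symm g) ((WithLp.equiv 2 (n → ℂ)).symm k)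
  rw [EuclideanSpace.norm_eq, EuclideanSpace.norm_eq] at h
  simp only [PiLp.inner_apply, RCLike.inner_apply', WithLp.equiv_symm_apply, PiLp.toLp_apply,
    Complex.sq_norm] at h
  exact h
lemma trace_msqrt_ctmul {m n : Type*} [Fintype m] [Fintype n] [DecidableEq n]
    (C : Matrix m n ℂ) :
    (msqrt (Cᴴ * C)).trace =
      ((∑ i, Real.sqrt ((Matrix.posSemidef_conjTranspose_mul_self C).1.eigenvalues i) : ℝ) : ℂ) := by
  have hH := Matrix.posSemidef_conjTranspose_mul_self C
  rw [msqrt, dif_pos hH]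
  rw [Matrix.trace_mul_cycle]
  rw [show (star (hH.1.eigenvectorUnitary : Matrix n n ℂ)) * (hH.1.eigenvectorUnitary : Matrix n n ℂ) = 1 from
    Matrix.mem_unitaryGroup_iff'.mp (hH.1.eigenvectorUnitary).2, one_mul, Matrix.trace_diagonal]
  push_cast
  rfl

lemma hKK_spec {m n : Type*} [Fintype m] [Fintype n] [DecidableEq n]
    (C : Matrix m n ℂ) :
    (C * ((Matrix.posSemidef_conjTranspose_mul_self C).1.eigenvectorUnitary : Matrix n n ℂ))ᴴ *
      (C * ((Matrix.posSemidef_conjTranspose_mul_self C).1.eigenvectorUnitary : Matrix n n ℂ)) =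
    Matrix.diagonal (fun i => ((Matrix.posSemidef_conjTranspose_mul_self C).1.eigenvalues i : ℂ)) := by
  have hH := Matrix.posSemidef_conjTranspose_mul_self C
  set V : Matrix n n ℂ := (hH.1.eigenvectorUnitary : Matrix n n ℂ) with hVdef
  have hV1 : Vᴴ * V = 1 := by
    rw [← Matrix.star_eq_conjTranspose]
    exact Matrix.mem_unitaryGroup_iff'.mp (hH.1.eigenvectorUnitary).2
  have hst := hH.1.spectral_theorem
  rw [Unitary.conjStarAlgAut_apply, Matrix.star_eq_conjTranspose] at hst
  calc (C * V)ᴴ * (C * V) = Vᴴ * (Cᴴ * C) * V := by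
        rw [Matrix.conjTranspose_mul]; simp only [Matrix.mul_assoc]
    _ = Vᴴ * (V * Matrix.diagonal (RCLike.ofReal ∘ hH.1.eigenvalues) * Vᴴ) * V := by rw [← hst]
    _ = (Vᴴ * V) * Matrix.diagonal (RCLike.ofReal ∘ hH.1.eigenvalues) * (Vᴴ * V) := by
        noncomm_ring
    _ = Matrix.diagonal (fun i => ((hH.1.eigenvalues i : ℝ) : ℂ)) := by
        rw [hV1, one_mul, mul_one]; rfl

lemma trace_msqrt_swap {m n : Type*} [Fintype m] [Fintype n] [DecidableEq m] [DecidableEq n]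
    (C : Matrix m n ℂ) :
    (msqrt (C * Cᴴ)).trace = (msqrt (Cᴴ * C)).trace := by
  classical
  have hH := Matrix.posSemidef_conjTranspose_mul_self C
  set d : n → ℝ := hH.1.eigenvalues with hd
  have hdnn : ∀ i, 0 ≤ d i := hH.eigenvalues_nonneg
  set V : Matrix n n ℂ := (hH.1.eigenvectorUnitary : Matrix n n ℂ) with hVdef
  have hV2 : V * Vᴴ = 1 := by
    rw [← Matrix.star_eq_conjTranspose]
    exact Matrix.mem_unitaryGroup_iff.mp (hH.1.eigenvectorUnitary).2
  set K : Matrix m n ℂ := C * V with hKdef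
  have hKK : Kᴴ * K = Matrix.diagonal (fun i => (d i : ℂ)) := hKK_spec C
  set e : n → ℂ := fun i => if d i = 0 then 0 else (((Real.sqrt (d i))⁻¹ : ℝ) : ℂ) with he
  set T : Matrix m m ℂ := K * Matrix.diagonal e * Kᴴ with hT
  have hepos : ∀ i, 0 ≤ e i := by
    intro i
    by_cases hi : d i = 0
    · simp [he, hi]
    · simp only [he, hi, if_false]
      have hr : (0:ℝ) ≤ (Real.sqrt (d i))⁻¹ := inv_nonneg.mpr (Real.sqrt_nonneg _)
      exact_mod_cast hr
  have hTpsd : T.PosSemidef := by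
    exact (Matrix.posSemidef_diagonal_iff.mpr hepos).mul_mul_conjTranspose_same K
  have hKchi : K * Matrix.diagonal (fun i => (if d i = 0 then 0 else 1 : ℂ)) = K := by
    ext i j
    rw [Matrix.mul_diagonal]
    by_cases hj : d j = 0
    · simp [hj, col_eq_zero K d hKK hj i]
    · simp [hj]
  have hede : Matrix.diagonal e * Matrix.diagonal (fun i => (d i : ℂ)) * Matrix.diagonal e
      = Matrix.diagonal (fun i => (if d i = 0 then 0 else 1 : ℂ)) := by
    rw [Matrix.diagonal_mul_diagonal, Matrix.diagonal_mul_diagonal]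
    apply congrArg Matrix.diagonal
    funext i
    by_cases hi : d i = 0
    · simp [he, hi]
    · have h0 : 0 < d i := lt_of_le_of_ne (hdnn i) (Ne.symm hi)
      have h1 : Real.sqrt (d i) ≠ 0 := ne_of_gt (Real.sqrt_pos.mpr h0)
      have h2 : Real.sqrt (d i) * Real.sqrt (d i) = d i := Real.mul_self_sqrt (hdnn i)
      have hr : ((Real.sqrt (d i))⁻¹ * d i * (Real.sqrt (d i))⁻¹ : ℝ) = 1 := by
        field_simp
        rw [Real.sq_sqrt (hdnn i)]
      simp only [he, hi, if_false]
      exact_mod_cast congrArg Complex.ofReal hr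
  have hT2 : T ^ 2 = C * Cᴴ := by
    have step : T * T = C * Cᴴ := by
      calc T * T = K * (Matrix.diagonal e * (Kᴴ * K) * Matrix.diagonal e) * Kᴴ := by
            simp only [hT, Matrix.mul_assoc]
        _ = K * Matrix.diagonal (fun i => (if d i = 0 then 0 else 1 : ℂ)) * Kᴴ := by
            rw [hKK, hede, Matrix.mul_assoc]
        _ = K * Kᴴ := by rw [hKchi]
        _ = C * Cᴴ := by
            rw [hKdef, Matrix.conjTranspose_mul, Matrix.mul_assoc, ← Matrix.mul_assoc V,
              hV2, Matrix.one_mul]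
    rw [pow_two, step]
  have hCCt := Matrix.posSemidef_self_mul_conjTranspose C
  have hsq : T = msqrt (C * Cᴴ) := eq_msqrt_of_sq_eq hTpsd hCCt hT2
  rw [← hsq, trace_msqrt_ctmul C]
  rw [hT, Matrix.trace_mul_cycle, hKK]
  rw [Matrix.diagonal_mul_diagonal, Matrix.trace_diagonal, ← hd, Complex.ofReal_sum]
  apply Finset.sum_congr rfl
  intro i _
  by_cases hi : d i = 0
  · simp [he, hi]
  · have h0 : 0 < d i := lt_of_le_of_ne (hdnn i) (Ne.symm hi)
    have h2 : Real.sqrt (d i) * Real.sqrt (d i) = d i := Real.mul_self_sqrt (hdnn i)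
    have h1 : Real.sqrt (d i) ≠ 0 := ne_of_gt (Real.sqrt_pos.mpr h0)
    have hr : (d i * (Real.sqrt (d i))⁻¹ : ℝ) = Real.sqrt (d i) := by
      field_simp
      rw [Real.sq_sqrt (hdnn i)]
    simp only [he, hi, if_false]
    exact_mod_cast congrArg Complex.ofReal hr

section Bound
variable {n : Type*} [Fintype n] [DecidableEq n]

lemma trace_as_cols (M W : Matrix n n ℂ) (hV2 :
      ((Matrix.posSemidef_conjTranspose_mul_self M).1.eigenvectorUnitary : Matrix n n ℂ) *
      ((Matrix.posSemidef_conjTranspose_mul_self M).1.eigenvectorUnitary : Matrix n n ℂ)ᴴ = 1) :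
    (M * W).trace = ∑ j, ∑ z,
      (starRingEnd ℂ) ((Wᴴ * ((Matrix.posSemidef_conjTranspose_mul_self M).1.eigenvectorUnitary : Matrix n n ℂ)) z j) *
      (M * ((Matrix.posSemidef_conjTranspose_mul_self M).1.eigenvectorUnitary : Matrix n n ℂ)) z j := by
  set V : Matrix n n ℂ := ((Matrix.posSemidef_conjTranspose_mul_self M).1.eigenvectorUnitary : Matrix n n ℂ)
  have h1 : (Wᴴ * V)ᴴ * (M * V) = Vᴴ * (W * M) * V := by
    rw [Matrix.conjTranspose_mul, Matrix.conjTranspose_conjTranspose]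
    simp only [Matrix.mul_assoc]
  have h2 : ((Wᴴ * V)ᴴ * (M * V)).trace = (M * W).trace := by
    rw [h1, Matrix.trace_mul_cycle, hV2, Matrix.one_mul, Matrix.trace_mul_comm]
  rw [← h2, Matrix.trace]
  apply Finset.sum_congr rfl
  intro j _
  rw [Matrix.diag_apply, Matrix.mul_apply]
  apply Finset.sum_congr rfl
  intro z _
  rw [Matrix.conjTranspose_apply]
  rfl

lemma re_trace_mul_unitary_le (M W : Matrix n n ℂ) (hW : Wᴴ * W = 1) :
    ((M * W).trace).re ≤ ((msqrt (Mᴴ * M)).trace).re := by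
  have hH := Matrix.posSemidef_conjTranspose_mul_self M
  set d : n → ℝ := hH.1.eigenvalues with hd
  set V : Matrix n n ℂ := (hH.1.eigenvectorUnitary : Matrix n n ℂ) with hVdef
  have hV1 : Vᴴ * V = 1 := by
    rw [← Matrix.star_eq_conjTranspose]
    exact Matrix.mem_unitaryGroup_iff'.mp (hH.1.eigenvectorUnitary).2
  have hV2 : V * Vᴴ = 1 := by
    rw [← Matrix.star_eq_conjTranspose]
    exact Matrix.mem_unitaryGroup_iff.mp (hH.1.eigenvectorUnitary).2
  set K : Matrix n n ℂ := M * V with hKdef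
  have hKK : Kᴴ * K = Matrix.diagonal (fun i => (d i : ℂ)) := hKK_spec M
  set G : Matrix n n ℂ := Wᴴ * V with hGdef
  have hWWt : W * Wᴴ = 1 := mul_eq_one_comm.mp hW
  have hGG : Gᴴ * G = Matrix.diagonal (fun _ : n => ((1:ℝ) : ℂ)) := by
    rw [hGdef, Matrix.conjTranspose_mul, Matrix.conjTranspose_conjTranspose]
    calc Vᴴ * W * (Wᴴ * V) = Vᴴ * (W * Wᴴ) * V := by simp only [Matrix.mul_assoc]
      _ = Matrix.diagonal (fun _ : n => ((1:ℝ) : ℂ)) := by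
          rw [hWWt, Matrix.mul_one, hV1]; simp
  have hgn : ∀ j, ∑ z, Complex.normSq (G z j) = 1 := fun j => col_normSq G _ hGG j
  have hkn : ∀ j, ∑ z, Complex.normSq (K z j) = d j := fun j => col_normSq K _ hKK j
  rw [trace_as_cols M W hV2, trace_msqrt_ctmul M]
  rw [Complex.re_sum]
  simp only [Complex.ofReal_re]
  calc ∑ j, (∑ z, (starRingEnd ℂ) (G z j) * K z j).re
      ≤ ∑ j, Real.sqrt (d j) := by
        apply Finset.sum_le_sum
        intro j _
        calc (∑ z, (starRingEnd ℂ) (G z j) * K z j).re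
            ≤ ‖∑ z, (starRingEnd ℂ) (G z j) * K z j‖ := Complex.re_le_norm _
          _ ≤ Real.sqrt (∑ z, Complex.normSq (G z j)) * Real.sqrt (∑ z, Complex.normSq (K z j)) :=
              cs_abs _ _
          _ = Real.sqrt (d j) := by rw [hgn j, hkn j, Real.sqrt_one, one_mul]
    _ = ∑ i, Real.sqrt (hH.1.eigenvalues i) := rfl
end Bound

section Attain
variable {n : Type*} [Fintype n] [DecidableEq n]

lemma exists_unitary_trace_eq (M : Matrix n n ℂ) :
    ∃ W : Matrix n n ℂ, Wᴴ * W = 1 ∧ (M * W).trace = (msqrt (Mᴴ * M)).trace := by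
  classical
  have hH := Matrix.posSemidef_conjTranspose_mul_self M
  set d : n → ℝ := hH.1.eigenvalues with hd
  have hdnn : ∀ i, 0 ≤ d i := hH.eigenvalues_nonneg
  set V : Matrix n n ℂ := (hH.1.eigenvectorUnitary : Matrix n n ℂ) with hVdef
  have hV1 : Vᴴ * V = 1 := by
    rw [← Matrix.star_eq_conjTranspose]
    exact Matrix.mem_unitaryGroup_iff'.mp (hH.1.eigenvectorUnitary).2
  set K : Matrix n n ℂ := M * V with hKdef
  have hKK : Kᴴ * K = Matrix.diagonal (fun i => (d i : ℂ)) := hKK_spec M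
  have hinner : ∀ i j : n, ∑ z, (starRingEnd ℂ) (K z i) * K z j
      = if i = j then (d i : ℂ) else 0 := by
    intro i j
    have h := congrFun (congrFun hKK i) j
    rw [Matrix.mul_apply] at h
    simp only [Matrix.conjTranspose_apply, Matrix.diagonal_apply] at h
    rw [← h]
    rfl
  -- the candidate orthonormal family
  set c : n → ℂ := fun i => (((Real.sqrt (d i))⁻¹ : ℝ) : ℂ) with hc
  set w : n → EuclideanSpace ℂ n :=
    fun i => (WithLp.equiv 2 (n → ℂ)).symm (fun z => c i * K z i) with hw
  have hcsq : ∀ i, d i ≠ 0 → (starRingEnd ℂ) (c i) * c i * (d i : ℂ) = 1 := by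
    intro i hi
    have h0 : 0 < d i := lt_of_le_of_ne (hdnn i) (Ne.symm hi)
    have h1 : Real.sqrt (d i) ≠ 0 := ne_of_gt (Real.sqrt_pos.mpr h0)
    have h2 : Real.sqrt (d i) * Real.sqrt (d i) = d i := Real.mul_self_sqrt (hdnn i)
    have hr : ((Real.sqrt (d i))⁻¹ * (Real.sqrt (d i))⁻¹ * d i : ℝ) = 1 := by
      field_simp
      rw [Real.sq_sqrt (hdnn i)]
    simp only [hc, Complex.conj_ofReal]
    exact_mod_cast congrArg Complex.ofReal hr
  have hworth : Orthonormal ℂ (({i | d i ≠ 0} : Set n).restrict w) := by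
    rw [orthonormal_iff_ite]
    intro i j
    simp only [Set.restrict_apply, hw, PiLp.inner_apply, RCLike.inner_apply',
      WithLp.equiv_symm_apply, PiLp.toLp_apply]
    show ∑ z, (starRingEnd ℂ) (c i.1 * K z i.1) * (c j.1 * K z j.1) = _
    have expand : ∀ z, (starRingEnd ℂ) (c i.1 * K z i.1) * (c j.1 * K z j.1)
        = ((starRingEnd ℂ) (c i.1) * c j.1) * ((starRingEnd ℂ) (K z i.1) * K z j.1) := by
      intro z; rw [_root_.map_mul]; ring
    rw [Finset.sum_congr rfl (fun z _ => expand z), ← Finset.mul_sum, hinner]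
    by_cases hij : i = j
    · subst hij
      simp only [if_pos rfl]
      exact hcsq i.1 i.2
    · have hij' : i.1 ≠ j.1 := fun h => hij (Subtype.ext h)
      simp [hij', hij]
  obtain ⟨b, hb⟩ := hworth.exists_orthonormalBasis_extension_of_card_eq (by simp)
  set G : Matrix n n ℂ := Matrix.of (fun z i => b i z) with hG
  have hGG : Gᴴ * G = 1 := by
    ext i j
    rw [Matrix.mul_apply]
    simp only [hG, Matrix.conjTranspose_apply, Matrix.of_apply, Matrix.one_apply]
    have := (orthonormal_iff_ite.mp b.orthonormal) i j
    rw [PiLp.inner_apply] at this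
    simpa [RCLike.inner_apply, mul_comm] using this
  have hW : (V * Gᴴ)ᴴ * (V * Gᴴ) = 1 := by
    rw [Matrix.conjTranspose_mul, Matrix.conjTranspose_conjTranspose]
    calc G * Vᴴ * (V * Gᴴ) = G * (Vᴴ * V) * Gᴴ := by simp only [Matrix.mul_assoc]
      _ = 1 := by rw [hV1, Matrix.mul_one]; exact mul_eq_one_comm.mp hGG
  refine ⟨V * Gᴴ, hW, ?_⟩
  have htr1 : (M * (V * Gᴴ)).trace = (Gᴴ * K).trace := by
    rw [← Matrix.mul_assoc, ← hKdef, Matrix.trace_mul_comm]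
  rw [htr1, trace_msqrt_ctmul M, Matrix.trace]
  rw [Complex.ofReal_sum]
  apply Finset.sum_congr rfl
  intro j _
  rw [Matrix.diag_apply, Matrix.mul_apply]
  simp only [Matrix.conjTranspose_apply, hG, Matrix.of_apply, Matrix.star_apply]
  by_cases hj : d j = 0
  · have hK0 : ∀ z, K z j = 0 := col_eq_zero K d hKK hj
    rw [← hd, hj]
    simp [hK0]
  · have hbj : b j = w j := hb j hj
    have hKz : ∀ z : n, star (b j z) * K z j = (starRingEnd ℂ) (c j * K z j) * K z j := by
      intro z; rw [hbj]; rfl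
    rw [Finset.sum_congr rfl (fun z _ => hKz z)]
    have expand : ∀ z, (starRingEnd ℂ) (c j * K z j) * K z j
        = (starRingEnd ℂ) (c j) * ((starRingEnd ℂ) (K z j) * K z j) := by
      intro z; rw [_root_.map_mul]; ring
    rw [Finset.sum_congr rfl (fun z _ => expand z), ← Finset.mul_sum, hinner, if_pos rfl]
    have h0 : 0 < d j := lt_of_le_of_ne (hdnn j) (Ne.symm hj)
    have h1 : Real.sqrt (d j) ≠ 0 := ne_of_gt (Real.sqrt_pos.mpr h0)
    have hr : ((Real.sqrt (d j))⁻¹ * d j : ℝ) = Real.sqrt (d j) := by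
      rw [inv_mul_eq_div, div_eq_iff h1, Real.mul_self_sqrt (hdnn j)]
    simp only [hc, Complex.conj_ofReal, ← hd]
    exact_mod_cast congrArg Complex.ofReal hr
end Attain


/-- For PSD matrices `P, Q` on `𝒳`, `𝒵 = ℂ^r` with
`r ≥ max{rank P, rank Q}`, and purifications `p, q ∈ 𝒵 ⊗ 𝒳` of `P` and `Q`, the
squared Bures distance `B(P,Q)` equals the minimum of `‖p − (U ⊗ I) q‖₂²` over all
unitaries `U` on `𝒵`. -/
theorem bures_uhlmann_purification
    {X : Type*} [Fintype X] [DecidableEq X] {r : ℕ}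
    (P Q : Matrix X X ℂ) (hP : P.PosSemidef) (hQ : Q.PosSemidef)
    (hrP : P.rank ≤ r) (hrQ : Q.rank ≤ r)
    (p q : Fin r × X → ℂ)
    (hp : ptraceZ (Matrix.vecMulVec p (star p)) = P)
    (hq : ptraceZ (Matrix.vecMulVec q (star q)) = Q) :
    IsLeast
      {t : ℝ | ∃ U : Matrix (Fin r) (Fin r) ℂ, Uᴴ * U = 1 ∧
        t = ∑ a : Fin r × X,
          Complex.normSq ((p - (U ⊗ₖ (1 : Matrix X X ℂ)) *ᵥ q) a)}
      (buresSq P Q) := by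
  classical
  set A : Matrix X (Fin r) ℂ := Matrix.of (fun x z => p (z, x)) with hA
  set B : Matrix X (Fin r) ℂ := Matrix.of (fun x z => q (z, x)) with hB
  have hPA : P = A * Aᴴ := by
    rw [← hp]
    ext x x'
    simp [ptraceZ, Matrix.vecMulVec_apply, Matrix.mul_apply, Matrix.conjTranspose_apply, hA]
  have hQB : Q = B * Bᴴ := by
    rw [← hq]
    ext x x'
    simp [ptraceZ, Matrix.vecMulVec_apply, Matrix.mul_apply, Matrix.conjTranspose_apply, hB]
  set M : Matrix (Fin r) (Fin r) ℂ := Bᴴ * A with hM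
  -- fidelity equals trace of sqrt of MᴴM
  have hfid : fidelity P Q = ((msqrt (Mᴴ * M)).trace).re := by
    have hsqH : (msqrt Q)ᴴ = msqrt Q := (msqrt_psd hQ).1
    have hsqmul : msqrt Q * msqrt Q = Q := msqrt_mul_self hQ
    set C : Matrix X (Fin r) ℂ := msqrt Q * A with hC
    have hCC : C * Cᴴ = msqrt Q * P * msqrt Q := by
      rw [hC, Matrix.conjTranspose_mul, hsqH, hPA]
      simp only [Matrix.mul_assoc]
    have hCtC : Cᴴ * C = Mᴴ * M := by
      rw [hC, Matrix.conjTranspose_mul, hsqH, hM, Matrix.conjTranspose_mul,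
        Matrix.conjTranspose_conjTranspose]
      calc Aᴴ * msqrt Q * (msqrt Q * A) = Aᴴ * (msqrt Q * msqrt Q) * A := by
            simp only [Matrix.mul_assoc]
        _ = Aᴴ * (B * Bᴴ) * A := by rw [hsqmul, hQB]
        _ = Aᴴ * B * (Bᴴ * A) := by simp only [Matrix.mul_assoc]
    rw [fidelity, ← hCC, trace_msqrt_swap C, hCtC]
  -- trace of P and Q as norms of the purifications
  have hptr : P.trace = ((∑ a : Fin r × X, Complex.normSq (p a) : ℝ) : ℂ) := by
    rw [← hp]
    have hdg : ∀ x, (ptraceZ (Matrix.vecMulVec p (star p))) x x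
        = ∑ z, (Complex.normSq (p (z, x)) : ℂ) := by
      intro x
      simp only [ptraceZ, Matrix.of_apply, Matrix.vecMulVec_apply, Pi.star_apply,
        Complex.star_def, Complex.mul_conj]
    rw [Matrix.trace]
    simp only [Matrix.diag_apply, hdg]
    push_cast
    rw [Fintype.sum_prod_type]
    exact Finset.sum_comm
  have hqtr : Q.trace = ((∑ a : Fin r × X, Complex.normSq (q a) : ℝ) : ℂ) := by
    rw [← hq]
    have hdg : ∀ x, (ptraceZ (Matrix.vecMulVec q (star q))) x x
        = ∑ z, (Complex.normSq (q (z, x)) : ℂ) := by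
      intro x
      simp only [ptraceZ, Matrix.of_apply, Matrix.vecMulVec_apply, Pi.star_apply,
        Complex.star_def, Complex.mul_conj]
    rw [Matrix.trace]
    simp only [Matrix.diag_apply, hdg]
    push_cast
    rw [Fintype.sum_prod_type]
    exact Finset.sum_comm
  -- the key expansion of the squared distance
  have hsum : ∀ U : Matrix (Fin r) (Fin r) ℂ, Uᴴ * U = 1 →
      (∑ a : Fin r × X, Complex.normSq ((p - (U ⊗ₖ (1 : Matrix X X ℂ)) *ᵥ q) a))
      = P.trace.re + Q.trace.re - 2 * ((M * Uᴴᵀ).trace).re := by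
    intro U hU
    set v : Fin r × X → ℂ := (U ⊗ₖ (1 : Matrix X X ℂ)) *ᵥ q with hvdef
    have hv : ∀ z x, v (z, x) = ∑ z', U z z' * q (z', x) := by
      intro z x
      rw [hvdef]
      simp [Matrix.mulVec, dotProduct, Fintype.sum_prod_type,
        Matrix.kroneckerMap_apply, Matrix.one_apply, mul_ite, ite_mul,
        mul_zero, zero_mul, mul_one]
    -- norm preservation
    have hvq : ∀ x : X, ∑ z, (starRingEnd ℂ) (v (z, x)) * v (z, x)
        = ∑ z, (starRingEnd ℂ) (q (z, x)) * q (z, x) := by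
      intro x
      have hvx : (fun z => v (z, x)) = U *ᵥ (fun z => q (z, x)) := by
        funext z; rw [hv]; rfl
      calc ∑ z, (starRingEnd ℂ) (v (z, x)) * v (z, x)
          = star (U *ᵥ fun z => q (z, x)) ⬝ᵥ (U *ᵥ fun z => q (z, x)) := by rw [← hvx]; rfl
        _ = (star (fun z => q (z, x)) ᵥ* Uᴴ) ⬝ᵥ (U *ᵥ fun z => q (z, x)) := by
            rw [Matrix.star_mulVec]
        _ = ((star (fun z => q (z, x)) ᵥ* Uᴴ) ᵥ* U) ⬝ᵥ (fun z => q (z, x)) := by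
            rw [Matrix.dotProduct_mulVec]
        _ = star (fun z => q (z, x)) ⬝ᵥ (fun z => q (z, x)) := by
            rw [Matrix.vecMul_vecMul, hU, Matrix.vecMul_one]
        _ = ∑ z, (starRingEnd ℂ) (q (z, x)) * q (z, x) := rfl
    have hvtr : Q.trace = ((∑ a : Fin r × X, Complex.normSq (v a) : ℝ) : ℂ) := by
      have hx : ∀ x : X, ∑ z, (Complex.normSq (v (z, x)) : ℂ)
          = ∑ z, (Complex.normSq (q (z, x)) : ℂ) := by
        intro x
        simpa only [Complex.normSq_eq_conj_mul_self] using hvq x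
      calc Q.trace = ((∑ a : Fin r × X, Complex.normSq (q a) : ℝ) : ℂ) := hqtr
        _ = ∑ z : Fin r, ∑ x : X, (Complex.normSq (q (z, x)) : ℂ) := by
            push_cast; rw [Fintype.sum_prod_type]
        _ = ∑ x : X, ∑ z : Fin r, (Complex.normSq (q (z, x)) : ℂ) := Finset.sum_comm
        _ = ∑ x : X, ∑ z : Fin r, (Complex.normSq (v (z, x)) : ℂ) :=
            Finset.sum_congr rfl (fun x _ => (hx x).symm)
        _ = ∑ z : Fin r, ∑ x : X, (Complex.normSq (v (z, x)) : ℂ) := Finset.sum_comm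
        _ = ((∑ a : Fin r × X, Complex.normSq (v a) : ℝ) : ℂ) := by
            push_cast; rw [Fintype.sum_prod_type]
    -- cross term
    have h3 : ∑ a : Fin r × X, (starRingEnd ℂ) (p a) * v a = (Mᴴ * Uᵀ).trace := by
      have hAv : ∀ x z, v (z, x) = (B * Uᵀ) x z := by
        intro x z
        rw [hv, Matrix.mul_apply]
        apply Finset.sum_congr rfl
        intro z' _
        rw [Matrix.transpose_apply]
        simp only [hB, Matrix.of_apply]
        ring
      calc ∑ a : Fin r × X, (starRingEnd ℂ) (p a) * v a
          = ∑ z, ∑ x, (starRingEnd ℂ) (A x z) * (B * Uᵀ) x z := by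
            rw [Fintype.sum_prod_type]
            exact Finset.sum_congr rfl (fun z _ => Finset.sum_congr rfl
              (fun x _ => by rw [hAv]; rfl))
        _ = (Aᴴ * (B * Uᵀ)).trace := by
            rw [Matrix.trace]
            exact Finset.sum_congr rfl (fun z _ => by
              rw [Matrix.diag_apply, Matrix.mul_apply]; rfl)
        _ = (Mᴴ * Uᵀ).trace := by
            rw [hM, Matrix.conjTranspose_mul, Matrix.conjTranspose_conjTranspose,
              Matrix.mul_assoc]
    have h3' : ∑ a : Fin r × X, p a * (starRingEnd ℂ) (v a) = (M * Uᴴᵀ).trace := by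
      have hconj : (starRingEnd ℂ) ((Mᴴ * Uᵀ).trace) = (M * Uᴴᵀ).trace := by
        have h0 : (Uᴴᵀ)ᴴ = Uᵀ := by ext i j; simp
        have h1 : (M * Uᴴᵀ)ᴴ = Uᵀ * Mᴴ := by
          rw [Matrix.conjTranspose_mul, h0]
        have h2 := Matrix.trace_conjTranspose (M * Uᴴᵀ)
        rw [h1, Matrix.trace_mul_comm] at h2
        rw [h2]
        exact Complex.conj_conj _
      rw [← hconj, ← h3, map_sum]
      apply Finset.sum_congr rfl
      intro a _
      rw [_root_.map_mul]
      simp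
    -- put everything together
    have expand : ∀ a : Fin r × X, Complex.normSq ((p - v) a)
        = Complex.normSq (p a) + Complex.normSq (v a) - 2 * (p a * (starRingEnd ℂ) (v a)).re := by
      intro a
      rw [Pi.sub_apply, Complex.normSq_sub]
    rw [Finset.sum_congr rfl (fun a _ => expand a)]
    rw [Finset.sum_sub_distrib, Finset.sum_add_distrib, ← Finset.mul_sum]
    have e1 : ∑ a : Fin r × X, Complex.normSq (p a) = P.trace.re := by rw [hptr]; simp
    have e2 : ∑ a : Fin r × X, Complex.normSq (v a) = Q.trace.re := by rw [hvtr]; simp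
    have e3 : ∑ a : Fin r × X, (p a * (starRingEnd ℂ) (v a)).re = ((M * Uᴴᵀ).trace).re := by
      rw [← Complex.re_sum, h3']
    rw [e1, e2, e3]
  have transfer : ∀ W : Matrix (Fin r) (Fin r) ℂ, Wᴴ * W = 1 → (Wᴴᵀ)ᴴ * (Wᴴᵀ) = 1 := by
    intro W hW
    have h0 : (Wᴴᵀ)ᴴ = Wᵀ := by ext i j; simp
    rw [h0, ← Matrix.transpose_mul, hW, Matrix.transpose_one]
  constructor
  · -- the minimum is attained
    obtain ⟨W, hW, hWtr⟩ := exists_unitary_trace_eq M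
    refine ⟨Wᴴᵀ, transfer W hW, ?_⟩
    rw [hsum (Wᴴᵀ) (transfer W hW)]
    have hWW : (Wᴴᵀ)ᴴᵀ = W := by ext i j; simp
    rw [hWW, hWtr, buresSq, hfid]
  · -- it is a lower bound
    rintro t ⟨U, hU, rfl⟩
    rw [hsum U hU, buresSq, hfid]
    have := re_trace_mul_unitary_le M (Uᴴᵀ) (transfer U hU)
    linarith
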